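/- arXiv:1708.08545 — 5 statements merged into one kernel-verified Lean document; each statement's English description precedes it below -/
import Mathlib

section
/- For all 0 < α < 1/2, the sum of the sine Fourier coefficients of g_α satisfies ∑_{j=1}^∞ ĝ_α(j) = (2/α)∫₀^α x/sin(πx) dx + (2/π)·log((1 + cos(απ))/sin(απ)). -/
open Real MeasureTheory intervalIntegral Filter Topology
open scoped FourierTransform

noncomputable def gprofile (α x : ℝ) : ℝ :=
  if x < α then x / α else if x < 1 - α then 1 else (1 - x) / α

noncomputable def gcoeff (α : ℝ) (j : ℕ) : ℝ :=
  2 * ∫ x in (0:ℝ)..1, gprofile α x * Real.sin (j * π * x)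

section main
variable {α : ℝ} (hα0 : 0 < α) (hα : α < 1/2)

lemma gprofile_meas : Measurable (gprofile α) := by
  unfold gprofile
  exact (measurable_id.div_const α).ite (measurableSet_lt measurable_id measurable_const)
    ((measurable_const.ite (measurableSet_lt measurable_id measurable_const)
      ((measurable_const.sub measurable_id).div_const α)))

include hα0 hα in
lemma gprofile_mem {x : ℝ} (hx0 : 0 ≤ x) (hx1 : x ≤ 1) :
    0 ≤ gprofile α x ∧ gprofile α x ≤ 1 := by
  unfold gprofile
  split_ifs with h1 h2
  · constructor
    · positivity
    · rw [div_le_one hα0]; linarith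
  · exact ⟨zero_le_one, le_refl 1⟩
  · constructor
    · apply div_nonneg _ hα0.le; linarith
    · rw [div_le_one hα0]; push_neg at h2; linarith

include hα0 hα in
lemma gprofile_abs_le {x : ℝ} (hx : x ∈ Set.Ioc (0:ℝ) 1) : |gprofile α x| ≤ 1 := by
  obtain ⟨h0, h1⟩ := gprofile_mem hα0 hα hx.1.le hx.2
  rw [abs_of_nonneg h0]; exact h1

/-- sin (π*x/2) ≥ x on [0,1] -/
lemma sin_half_ge {x : ℝ} (hx0 : 0 ≤ x) (hx1 : x ≤ 1) : x ≤ Real.sin (π * x / 2) := by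
  have := Real.le_sin_mul hx0 hx1
  rwa [show π / 2 * x = π * x / 2 by ring] at this

include hα0 hα in
lemma gprofile_div_sin_le {x : ℝ} (hx : x ∈ Set.Ioc (0:ℝ) 1) :
    |gprofile α x / Real.sin (π * x / 2)| ≤ 1 / α := by
  obtain ⟨hx0, hx1⟩ := hx
  have hs : x ≤ Real.sin (π * x / 2) := sin_half_ge hx0.le hx1
  have hspos : 0 < Real.sin (π * x / 2) := lt_of_lt_of_le hx0 hs
  obtain ⟨hg0, hg1⟩ := gprofile_mem hα0 hα hx0.le hx1
  rw [abs_of_nonneg (div_nonneg hg0 hspos.le), div_le_div_iff₀ hspos hα0, one_mul]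
  by_cases h : x < α
  · have : gprofile α x = x / α := if_pos h
    rw [this, div_mul_cancel₀ _ hα0.ne']
    exact hs
  · push_neg at h
    nlinarith

/-- Dirichlet kernel identity -/
lemma kernel_sum (N : ℕ) (x : ℝ) :
    (∑ j ∈ Finset.range N, Real.sin ((j+1) * π * x)) * (2 * Real.sin (π * x / 2)) =
      Real.cos (π * x / 2) - Real.cos ((2 * N + 1) * (π * x / 2)) := by
  induction N with
  | zero => simp
  | succ n ih =>
    rw [Finset.sum_range_succ, add_mul, ih]
    have key : Real.cos ((2 * n + 1) * (π * x / 2)) - Real.cos ((2 * (n+1) + 1) * (π * x / 2))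
        = Real.sin ((n + 1) * π * x) * (2 * Real.sin (π * x / 2)) := by
      rw [Real.cos_sub_cos]
      have h1 : ((2 * (n:ℝ) + 1) * (π * x / 2) + (2 * (n+1) + 1) * (π * x / 2)) / 2
          = ((n:ℝ) + 1) * π * x := by ring
      have h2 : ((2 * (n:ℝ) + 1) * (π * x / 2) - (2 * (n+1) + 1) * (π * x / 2)) / 2
          = -(π * x / 2) := by ring
      rw [h1, h2, Real.sin_neg]
      push_cast
      ring
    push_cast at key ⊢
    linarith

include hα0 hα in
lemma integrable_g_mul {f : ℝ → ℝ} (hf : Continuous f) {a b : ℝ} (hab : a ≤ b)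
    (h0 : 0 ≤ a) (h1 : b ≤ 1) :
    IntervalIntegrable (fun x => gprofile α x * f x) volume a b := by
  rw [intervalIntegrable_iff_integrableOn_Ioc_of_le hab]
  apply MeasureTheory.Integrable.bdd_mul (c := 1)
      (hf.integrableOn_Ioc) (gprofile_meas.aestronglyMeasurable)
  rw [ae_restrict_iff' measurableSet_Ioc]
  filter_upwards with x hx
  exact gprofile_abs_le hα0 hα ⟨lt_of_le_of_lt h0 hx.1, hx.2.trans h1⟩

lemma hasDerivAt_sin_c (c x : ℝ) :
    HasDerivAt (fun y => Real.sin (c*y)) (Real.cos (c*x) * c) x := by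
  simpa [Function.comp_def] using (Real.hasDerivAt_sin (c*x)).comp x ((hasDerivAt_id x).const_mul c)

lemma hasDerivAt_cos_c (c x : ℝ) :
    HasDerivAt (fun y => Real.cos (c*y)) (-Real.sin (c*x) * c) x := by
  simpa [Function.comp_def] using (Real.hasDerivAt_cos (c*x)).comp x ((hasDerivAt_id x).const_mul c)

include hα0 hα in
lemma gcoeff_eq {j : ℕ} (hj : 1 ≤ j) :
    gcoeff α j = 2 / (α * (j*π)^2) *
      (Real.sin (j*π*α) + Real.sin (j*π*(1-α))) := by
  have hπ := Real.pi_pos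
  set c : ℝ := j * π with hc
  have hcpos : 0 < c := by
    apply mul_pos _ hπ
    exact_mod_cast Nat.pos_of_ne_zero (by omega)
  have hc0 : c ≠ 0 := hcpos.ne'
  have hαα : α ≤ 1 - α := by linarith
  have hcont : Continuous (fun x => Real.sin (c * x)) :=
    Real.continuous_sin.comp (continuous_const.mul continuous_id)
  have iA := integrable_g_mul hα0 hα hcont hα0.le le_rfl (by linarith)
  have iB := integrable_g_mul hα0 hα hcont hαα hα0.le (by linarith)
  have iC := integrable_g_mul hα0 hα hcont (by linarith : 1-α ≤ 1) (by linarith) le_rfl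
  have hsplit : (∫ x in (0:ℝ)..1, gprofile α x * Real.sin (c * x)) =
      (∫ x in (0:ℝ)..α, gprofile α x * Real.sin (c * x)) +
      (∫ x in α..(1-α), gprofile α x * Real.sin (c * x)) +
      (∫ x in (1-α)..1, gprofile α x * Real.sin (c * x)) := by
    rw [integral_add_adjacent_intervals iA iB,
        integral_add_adjacent_intervals (iA.trans iB) iC]
  have hI1 : (∫ x in (0:ℝ)..α, gprofile α x * Real.sin (c * x)) =
      Real.sin (c*α)/(α*c^2) - Real.cos (c*α)/c := by
    rw [show (∫ x in (0:ℝ)..α, gprofile α x * Real.sin (c * x))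
        = ∫ x in (0:ℝ)..α, (x/α) * Real.sin (c * x) from
      integral_congr (fun x hx => by
        rw [Set.uIcc_of_le hα0.le] at hx
        unfold gprofile
        rcases lt_or_eq_of_le hx.2 with h | h
        · rw [if_pos h]
        · rw [h, if_neg (lt_irrefl α), if_pos (by linarith), div_self hα0.ne'])]
    have hd : ∀ x ∈ Set.uIcc (0:ℝ) α, HasDerivAt
        (fun y => (Real.sin (c*y)/c^2 - y * Real.cos (c*y)/c)/α)
        ((x/α) * Real.sin (c*x)) x := by
      intro x _
      have h3 : HasDerivAt (fun y => y * Real.cos (c*y))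
          (1 * Real.cos (c*x) + x * (-Real.sin (c*x) * c)) x :=
        (hasDerivAt_id x).mul (hasDerivAt_cos_c c x)
      have := (((hasDerivAt_sin_c c x).div_const (c^2)).sub (h3.div_const c)).div_const α
      refine this.congr_deriv ?_
      field_simp
      ring
    rw [integral_eq_sub_of_hasDerivAt hd
      (Continuous.intervalIntegrable (by fun_prop) _ _)]
    simp only [mul_zero, Real.sin_zero, Real.cos_zero]
    field_simp
    ring
  have hI2 : (∫ x in α..(1-α), gprofile α x * Real.sin (c * x)) =
      Real.cos (c*α)/c - Real.cos (c*(1-α))/c := by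
    rw [show (∫ x in α..(1-α), gprofile α x * Real.sin (c * x))
        = ∫ x in α..(1-α), Real.sin (c * x) from
      integral_congr (fun x hx => by
        rw [Set.uIcc_of_le hαα] at hx
        unfold gprofile
        rcases lt_or_eq_of_le hx.2 with h | h
        · rw [if_neg (not_lt.2 hx.1), if_pos h, one_mul]
        · rw [h, if_neg (by push_neg; linarith), if_neg (lt_irrefl _),
              show (1:ℝ) - (1-α) = α from by ring, div_self hα0.ne', one_mul])]
    have hd : ∀ x ∈ Set.uIcc α (1-α), HasDerivAt
        (fun y => -Real.cos (c*y)/c) (Real.sin (c*x)) x := by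
      intro x _
      have := ((hasDerivAt_cos_c c x).neg).div_const c
      refine this.congr_deriv ?_
      field_simp
    rw [integral_eq_sub_of_hasDerivAt hd (hcont.intervalIntegrable _ _)]
    ring
  have hI3 : (∫ x in (1-α)..1, gprofile α x * Real.sin (c * x)) =
      Real.cos (c*(1-α))/c + (Real.sin (c*(1-α)) - Real.sin c)/(α*c^2) := by
    rw [show (∫ x in (1-α)..1, gprofile α x * Real.sin (c * x))
        = ∫ x in (1-α)..1, ((1-x)/α) * Real.sin (c * x) from
      integral_congr (fun x hx => by
        rw [Set.uIcc_of_le (by linarith : 1-α ≤ 1)] at hx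
        unfold gprofile
        rw [if_neg (by push_neg; linarith [hx.1]), if_neg (not_lt.2 hx.1)])]
    have hd : ∀ x ∈ Set.uIcc (1-α) 1, HasDerivAt
        (fun y => (-(1-y) * Real.cos (c*y)/c - Real.sin (c*y)/c^2)/α)
        (((1-x)/α) * Real.sin (c*x)) x := by
      intro x _
      have h3 : HasDerivAt (fun y => -(1-y) * Real.cos (c*y))
          (1 * Real.cos (c*x) + -(1-x) * (-Real.sin (c*x) * c)) x := by
        have hlin : HasDerivAt (fun y : ℝ => -(1-y)) 1 x := by
          simpa [Pi.neg_def] using ((hasDerivAt_id x).const_sub 1).neg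
        exact hlin.mul (hasDerivAt_cos_c c x)
      have := ((h3.div_const c).sub ((hasDerivAt_sin_c c x).div_const (c^2))).div_const α
      refine this.congr_deriv ?_
      field_simp
      ring
    rw [integral_eq_sub_of_hasDerivAt hd
      (Continuous.intervalIntegrable (by fun_prop) _ _)]
    simp only [mul_one]
    field_simp
    ring
  have hsin : Real.sin c = 0 := by
    rw [hc]
    exact Real.sin_nat_mul_pi j
  unfold gcoeff
  rw [← hc, hsplit, hI1, hI2, hI3, hsin]
  field_simp
  ring

include hα0 hα in
lemma summable_gcoeff : Summable (fun j : ℕ => gcoeff α (j+1)) := by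
  have hπ := Real.pi_pos
  apply Summable.of_abs
  have hb : Summable (fun j : ℕ => (4/(α*π^2)) * (1/((j:ℝ)+1)^2)) := by
    apply Summable.mul_left
    have h2 : Summable (fun n : ℕ => (1:ℝ)/(n:ℝ)^2) := by
      simpa using Real.summable_one_div_nat_pow.mpr (by norm_num : 1 < 2)
    have := (summable_nat_add_iff 1).mpr h2
    simpa using this
  apply Summable.of_nonneg_of_le (fun j => abs_nonneg _) _ hb
  intro j
  rw [gcoeff_eq hα0 hα (by omega : 1 ≤ j + 1)]
  push_cast
  have hden : (0:ℝ) < α * (((j:ℝ)+1)*π)^2 := by positivity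
  rw [abs_mul, abs_of_pos (by positivity : (0:ℝ) < 2 / (α * (((j:ℝ)+1)*π)^2))]
  have habs : |Real.sin (((j:ℝ)+1)*π*α) + Real.sin (((j:ℝ)+1)*π*(1-α))| ≤ 2 := by
    calc |Real.sin (((j:ℝ)+1)*π*α) + Real.sin (((j:ℝ)+1)*π*(1-α))|
        ≤ |Real.sin (((j:ℝ)+1)*π*α)| + |Real.sin (((j:ℝ)+1)*π*(1-α))| := abs_add_le _ _
      _ ≤ 1 + 1 := add_le_add (Real.abs_sin_le_one _) (Real.abs_sin_le_one _)
      _ = 2 := by norm_num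
  calc 2 / (α * (((j:ℝ)+1)*π)^2) * |_| ≤ 2 / (α * (((j:ℝ)+1)*π)^2) * 2 := by
        exact mul_le_mul_of_nonneg_left habs (by positivity)
    _ = 4/(α*π^2) * (1/((j:ℝ)+1)^2) := by field_simp; ring

include hα0 hα in
lemma integrable_h_mul {f : ℝ → ℝ} (hf : Continuous f) :
    IntervalIntegrable (fun x => gprofile α x / Real.sin (π*x/2) * f x) volume 0 1 := by
  rw [intervalIntegrable_iff_integrableOn_Ioc_of_le zero_le_one]
  apply MeasureTheory.Integrable.bdd_mul (c := 1/α) hf.integrableOn_Ioc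
    ((gprofile_meas.div (by fun_prop)).aestronglyMeasurable)
  rw [ae_restrict_iff' measurableSet_Ioc]
  filter_upwards with x hx
  exact gprofile_div_sin_le hα0 hα hx

include hα0 hα in
lemma partial_eq (N : ℕ) : ∑ j ∈ Finset.range N, gcoeff α (j+1) =
    (∫ x in (0:ℝ)..1, gprofile α x / Real.sin (π*x/2) * Real.cos (π*x/2)) -
    (∫ x in (0:ℝ)..1, gprofile α x / Real.sin (π*x/2) * Real.cos ((2*(N:ℝ)+1)*(π*x/2))) := by
  have h1 := integrable_h_mul hα0 hα (f := fun x => Real.cos (π*x/2)) (by fun_prop)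
  have h2 := integrable_h_mul hα0 hα
    (f := fun x => Real.cos ((2*(N:ℝ)+1)*(π*x/2))) (by fun_prop)
  rw [← integral_sub h1 h2]
  have step1 : ∀ j : ℕ, gcoeff α (j+1) =
      ∫ x in (0:ℝ)..1, 2 * (gprofile α x * Real.sin (((j:ℝ)+1) * π * x)) := by
    intro j
    unfold gcoeff
    rw [← intervalIntegral.integral_const_mul]
    push_cast
    rfl
  rw [Finset.sum_congr rfl fun j _ => step1 j, ← intervalIntegral.integral_finset_sum]
  · apply integral_congr
    intro x hx
    rw [Set.uIcc_of_le zero_le_one] at hx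
    rcases eq_or_lt_of_le hx.1 with h | h
    · simp only [← h]
      have g0 : gprofile α 0 = 0 := by
        unfold gprofile
        rw [if_pos hα0, zero_div]
      simp [g0]
    · have hs : 0 < Real.sin (π * x / 2) := by
        apply Real.sin_pos_of_pos_of_lt_pi
        · positivity
        · nlinarith [hx.2, Real.pi_pos]
      have hk := kernel_sum N x
      have hS : (∑ j ∈ Finset.range N, Real.sin (((j:ℝ)+1)*π*x)) =
          (Real.cos (π*x/2) - Real.cos ((2*(N:ℝ)+1)*(π*x/2)))/(2*Real.sin (π*x/2)) := by
        rw [eq_div_iff (by positivity)]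
        exact_mod_cast hk
      calc ∑ j ∈ Finset.range N, 2 * (gprofile α x * Real.sin (((j:ℝ)+1)*π*x))
          = 2 * (gprofile α x * ∑ j ∈ Finset.range N, Real.sin (((j:ℝ)+1)*π*x)) := by
            rw [Finset.mul_sum, Finset.mul_sum]
        _ = _ := by rw [hS]; field_simp
  · intro j _
    exact (integrable_g_mul hα0 hα (by fun_prop) zero_le_one le_rfl le_rfl).const_mul 2

include hα0 hα in
lemma tendsto_osc : Tendsto (fun N : ℕ => ∫ x in (0:ℝ)..1,
    gprofile α x / Real.sin (π*x/2) * Real.cos ((2*(N:ℝ)+1)*(π*x/2))) atTop (𝓝 0) := by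
  set h : ℝ → ℝ := fun x => gprofile α x / Real.sin (π*x/2) with hh
  have hmeas : Measurable h := gprofile_meas.div (by fun_prop)
  have hint : IntegrableOn (fun x => (h x : ℂ)) (Set.Ioc 0 1) := by
    apply MeasureTheory.Integrable.mono' (g := fun _ => 1/α)
      (integrableOn_const measure_Ioc_lt_top.ne)
      (Complex.measurable_ofReal.comp hmeas).aestronglyMeasurable
    rw [ae_restrict_iff' measurableSet_Ioc]
    filter_upwards with x hx
    simp only [Function.comp_apply, Complex.norm_real, Real.norm_eq_abs]
    exact gprofile_div_sin_le hα0 hα hx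
  set F : ℝ → ℂ := Set.indicator (Set.Ioc 0 1) (fun x => (h x : ℂ)) with hF
  have RL := Real.tendsto_integral_exp_smul_cocompact F
  have hw : Tendsto (fun N : ℕ => -((2*(N:ℝ)+1)/4)) atTop (cocompact ℝ) := by
    rw [cocompact_eq_atBot_atTop]
    apply Tendsto.mono_right _ le_sup_left
    apply tendsto_neg_atBot_iff.mpr
    apply Tendsto.atTop_div_const (by norm_num)
    apply tendsto_atTop_add_const_right
    exact (tendsto_natCast_atTop_atTop (R := ℝ)).const_mul_atTop (by norm_num)
  have key := RL.comp hw
  rw [show (0:ℂ) = 0 from rfl] at key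
  have hre := (Complex.continuous_re.tendsto 0).comp key
  simp only [Complex.zero_re] at hre
  apply hre.congr
  intro N
  simp only [Function.comp_apply]
  have hEq : (∫ v : ℝ, 𝐞 (-(v * -((2*(N:ℝ)+1)/4))) • F v) =
      ∫ v in Set.Ioc (0:ℝ) 1,
        Complex.exp (((2*(N:ℝ)+1)*(π*v/2) : ℝ) * Complex.I) * (h v : ℂ) := by
    rw [← MeasureTheory.integral_indicator measurableSet_Ioc]
    congr 1
    funext v
    rw [hF]
    by_cases hv : v ∈ Set.Ioc (0:ℝ) 1
    · rw [Set.indicator_of_mem hv, Set.indicator_of_mem hv, Circle.smul_def,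
        Real.fourierChar_apply]
      congr 2
      push_cast
      ring
    · rw [Set.indicator_of_notMem hv, Set.indicator_of_notMem hv, smul_zero]
  rw [hEq]
  have hint2 : Integrable (fun v =>
      Complex.exp (((2*(N:ℝ)+1)*(π*v/2) : ℝ) * Complex.I) * (h v : ℂ))
      (volume.restrict (Set.Ioc (0:ℝ) 1)) := by
    apply Integrable.bdd_mul (c := 1) hint
    · apply Continuous.aestronglyMeasurable
      fun_prop
    · filter_upwards with x
      rw [Complex.norm_exp_ofReal_mul_I]
  rw [intervalIntegral.integral_of_le zero_le_one]
  calc (∫ (v : ℝ) in Set.Ioc (0:ℝ) 1,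
        Complex.exp (((2*(N:ℝ)+1)*(π*v/2) : ℝ) * Complex.I) * ((h v : ℝ) : ℂ)).re
      = ∫ (v : ℝ) in Set.Ioc (0:ℝ) 1,
        (Complex.exp (((2*(N:ℝ)+1)*(π*v/2) : ℝ) * Complex.I) * ((h v : ℝ) : ℂ)).re :=
        (integral_re hint2).symm
    _ = _ := by
        congr 1
        funext v
        rw [Complex.mul_re, Complex.exp_ofReal_mul_I_re, Complex.ofReal_re, Complex.ofReal_im,
          mul_zero, sub_zero, mul_comm]

lemma hds (x : ℝ) : HasDerivAt (fun y => Real.sin (π*y/2)) (Real.cos (π*x/2) * (π/2)) x := by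
  have := hasDerivAt_sin_c (π/2) x
  simp only [show ∀ y:ℝ, π/2*y = π*y/2 from fun y => by ring] at this
  exact this

lemma II_congr_Icc {f g : ℝ → ℝ} {a b : ℝ} (hab : a ≤ b) (h : Set.EqOn f g (Set.Icc a b))
    (hf : IntervalIntegrable f volume a b) : IntervalIntegrable g volume a b := by
  apply hf.congr
  rw [Set.uIoc_of_le hab]
  intro x hx
  exact h ⟨hx.1.le, hx.2⟩

include hα0 hα in
lemma value_eq : (∫ x in (0:ℝ)..1, gprofile α x / Real.sin (π*x/2) * Real.cos (π*x/2)) =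
    (2 / α) * (∫ x in (0:ℝ)..α, x / Real.sin (π * x)) +
      (2 / π) * Real.log ((1 + Real.cos (α * π)) / Real.sin (α * π)) := by
  have hπ := Real.pi_pos
  have hαα : α ≤ 1 - α := by linarith
  have h1α : (1:ℝ) - α ≤ 1 := by linarith
  -- positivity facts
  have hspos : ∀ x : ℝ, 0 < x → x < 1 → 0 < Real.sin (π*x/2) := fun x h0 h1 => by
    apply Real.sin_pos_of_pos_of_lt_pi (by positivity)
    nlinarith
  have Ifull := integrable_h_mul hα0 hα (f := fun x => Real.cos (π*x/2)) (by fun_prop)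
  have I1 : IntervalIntegrable (fun x => gprofile α x / Real.sin (π*x/2) * Real.cos (π*x/2))
      volume 0 α := Ifull.mono_set (by
    rw [Set.uIcc_of_le hα0.le, Set.uIcc_of_le zero_le_one]
    exact Set.Icc_subset_Icc le_rfl (by linarith))
  have I2 : IntervalIntegrable (fun x => gprofile α x / Real.sin (π*x/2) * Real.cos (π*x/2))
      volume α (1-α) := Ifull.mono_set (by
    rw [Set.uIcc_of_le hαα, Set.uIcc_of_le zero_le_one]
    exact Set.Icc_subset_Icc hα0.le h1α)
  have I3 : IntervalIntegrable (fun x => gprofile α x / Real.sin (π*x/2) * Real.cos (π*x/2))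
      volume (1-α) 1 := Ifull.mono_set (by
    rw [Set.uIcc_of_le h1α, Set.uIcc_of_le zero_le_one]
    exact Set.Icc_subset_Icc (by linarith) le_rfl)
  have hsplit : (∫ x in (0:ℝ)..1, gprofile α x / Real.sin (π*x/2) * Real.cos (π*x/2)) =
      (∫ x in (0:ℝ)..α, gprofile α x / Real.sin (π*x/2) * Real.cos (π*x/2)) +
      (∫ x in α..(1-α), gprofile α x / Real.sin (π*x/2) * Real.cos (π*x/2)) +
      (∫ x in (1-α)..1, gprofile α x / Real.sin (π*x/2) * Real.cos (π*x/2)) := by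
    rw [integral_add_adjacent_intervals I1 I2, integral_add_adjacent_intervals (I1.trans I2) I3]
  -- middle piece
  have hP2 : (∫ x in α..(1-α), gprofile α x / Real.sin (π*x/2) * Real.cos (π*x/2)) =
      (2/π) * Real.log (Real.sin (π*(1-α)/2)) - (2/π) * Real.log (Real.sin (π*α/2)) := by
    have heq : Set.EqOn (fun x => gprofile α x / Real.sin (π*x/2) * Real.cos (π*x/2))
        (fun x => Real.cos (π*x/2) / Real.sin (π*x/2)) (Set.Icc α (1-α)) := by
      intro x hx
      have : gprofile α x = 1 := by
        unfold gprofile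
        rcases lt_or_eq_of_le hx.2 with h | h
        · rw [if_neg (not_lt.2 hx.1), if_pos h]
        · rw [h, if_neg (by push_neg; linarith), if_neg (lt_irrefl _),
            show (1:ℝ) - (1-α) = α from by ring, div_self hα0.ne']
      simp only [this, div_mul_eq_mul_div, one_mul]
    rw [integral_congr (by rwa [Set.uIcc_of_le hαα])]
    have hd : ∀ x ∈ Set.uIcc α (1-α), HasDerivAt
        (fun y => (2/π) * Real.log (Real.sin (π*y/2)))
        (Real.cos (π*x/2) / Real.sin (π*x/2)) x := by
      intro x hx
      rw [Set.uIcc_of_le hαα] at hx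
      have hsx : 0 < Real.sin (π*x/2) := hspos x (by linarith [hx.1]) (by linarith [hx.2])
      have := ((hds x).log hsx.ne').const_mul (2/π)
      refine this.congr_deriv ?_
      field_simp
    have hci : ContinuousOn (fun x => Real.cos (π*x/2) / Real.sin (π*x/2))
        (Set.uIcc α (1-α)) := by
      apply ContinuousOn.div (by fun_prop) (by fun_prop)
      intro x hx
      rw [Set.uIcc_of_le hαα] at hx
      exact (hspos x (by linarith [hx.1]) (by linarith [hx.2])).ne'
    rw [integral_eq_sub_of_hasDerivAt hd hci.intervalIntegrable]
  -- first and third pieces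
  set ψ : ℝ → ℝ := fun u => (u/α) * (Real.cos (π*(1-u)/2) / Real.sin (π*(1-u)/2)) with hψdef
  have heq1 : Set.EqOn (fun x => gprofile α x / Real.sin (π*x/2) * Real.cos (π*x/2))
      (fun x => (x/α) * (Real.cos (π*x/2) / Real.sin (π*x/2))) (Set.Icc 0 α) := by
    intro x hx
    have hg : gprofile α x = x/α := by
      unfold gprofile
      rcases lt_or_eq_of_le hx.2 with h | h
      · rw [if_pos h]
      · rw [h, if_neg (lt_irrefl α), if_pos (by linarith), div_self hα0.ne']
    simp only [hg]
    ring
  have heq3 : Set.EqOn (fun x => gprofile α x / Real.sin (π*x/2) * Real.cos (π*x/2))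
      (fun x => ψ (1-x)) (Set.Icc (1-α) 1) := by
    intro x hx
    have hg : gprofile α x = (1-x)/α := by
      unfold gprofile
      rw [if_neg (by push_neg; linarith [hx.1]), if_neg (not_lt.2 hx.1)]
    simp only [hψdef, sub_sub_cancel, hg]
    ring
  have hP1 : (∫ x in (0:ℝ)..α, gprofile α x / Real.sin (π*x/2) * Real.cos (π*x/2)) =
      ∫ x in (0:ℝ)..α, (x/α) * (Real.cos (π*x/2) / Real.sin (π*x/2)) :=
    integral_congr (by rwa [Set.uIcc_of_le hα0.le])
  have hP3 : (∫ x in (1-α)..1, gprofile α x / Real.sin (π*x/2) * Real.cos (π*x/2)) =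
      ∫ x in (0:ℝ)..α, ψ x := by
    rw [integral_congr (f := fun x => gprofile α x / Real.sin (π*x/2) * Real.cos (π*x/2))
      (g := fun x => ψ (1-x)) (by rwa [Set.uIcc_of_le h1α]),
      integral_comp_sub_left ψ 1]
    norm_num
  have If1 : IntervalIntegrable (fun x => (x/α) * (Real.cos (π*x/2) / Real.sin (π*x/2)))
      volume 0 α := II_congr_Icc hα0.le heq1 I1
  have Iψ : IntervalIntegrable ψ volume 0 α := by
    have h' := (II_congr_Icc h1α heq3 I3).comp_sub_left 1
    simp only [sub_sub_cancel, sub_self, show (1:ℝ)-(1-α) = α from by ring] at h'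
    exact h'.symm
  have hP13 : (∫ x in (0:ℝ)..α, (x/α) * (Real.cos (π*x/2) / Real.sin (π*x/2))) +
      (∫ x in (0:ℝ)..α, ψ x) = (2/α) * ∫ x in (0:ℝ)..α, x / Real.sin (π*x) := by
    rw [← integral_add If1 Iψ, ← intervalIntegral.integral_const_mul]
    apply integral_congr
    intro x hx
    rw [Set.uIcc_of_le hα0.le] at hx
    rcases eq_or_lt_of_le hx.1 with h | h
    · simp only [← h, hψdef]
      norm_num
    · have hs : 0 < Real.sin (π*x/2) := hspos x h (by linarith [hx.2])
      have hc : 0 < Real.cos (π*x/2) := by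
        apply Real.cos_pos_of_mem_Ioo
        constructor
        · nlinarith
        · nlinarith [hx.2]
      simp only [hψdef]
      rw [show π*(1-x)/2 = π/2 - π*x/2 from by ring, Real.sin_pi_div_two_sub,
        Real.cos_pi_div_two_sub, show π*x = 2*(π*x/2) from by ring, Real.sin_two_mul]
      set y := π*x/2 with hy
      field_simp
      linear_combination
        (Real.sin_sq_add_cos_sq y)
  -- log identity
  have s0 : 0 < Real.sin (π*α/2) := hspos α hα0 (by linarith)
  have c0 : 0 < Real.cos (π*α/2) := by
    apply Real.cos_pos_of_mem_Ioo
    constructor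
    · nlinarith
    · nlinarith
  have hlog : (2/π) * Real.log (Real.sin (π*(1-α)/2)) - (2/π) * Real.log (Real.sin (π*α/2)) =
      (2/π) * Real.log ((1 + Real.cos (α*π)) / Real.sin (α*π)) := by
    rw [show π*(1-α)/2 = π/2 - π*α/2 from by ring, Real.sin_pi_div_two_sub,
      ← mul_sub, ← Real.log_div c0.ne' s0.ne']
    congr 2
    rw [show α*π = 2*(π*α/2) from by ring, Real.cos_two_mul, Real.sin_two_mul]
    field_simp
    ring
  rw [hsplit, hP1, hP2, hP3, hlog]
  linarith [hP13]

include hα0 hα in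
theorem stmt_1' :
    ∑' j : ℕ, gcoeff α (j + 1) =
      (2 / α) * (∫ x in (0:ℝ)..α, x / Real.sin (π * x)) +
        (2 / π) * Real.log ((1 + Real.cos (α * π)) / Real.sin (α * π)) := by
  have hsum := summable_gcoeff hα0 hα
  have hhs := hsum.hasSum
  have h2 := hhs.tendsto_sum_nat
  have h3 : Tendsto (fun N => ∑ j ∈ Finset.range N, gcoeff α (j+1)) atTop
      (𝓝 ((∫ x in (0:ℝ)..1, gprofile α x / Real.sin (π*x/2) * Real.cos (π*x/2)) - 0)) :=
    (tendsto_const_nhds.sub (tendsto_osc hα0 hα)).congr (fun N => (partial_eq hα0 hα N).symm)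
  have hval := tendsto_nhds_unique h2 h3
  rw [hval, sub_zero, value_eq hα0 hα]

end main

theorem stmt_1 (α : ℝ) (hα0 : 0 < α) (hα : α < 1/2) :
    ∑' j : ℕ, gcoeff α (j + 1) =
      (2 / α) * (∫ x in (0:ℝ)..α, x / Real.sin (π * x)) +
        (2 / π) * Real.log ((1 + Real.cos (α * π)) / Real.sin (α * π)) := by
  exact stmt_1' hα0 hα
end

section
/- For all r ∈ [0,1) and x ∈ (0,1), the series identity 2·∑_{k=0}^∞ r^{2k+1} sin((2k+1)πx) = λ(r)·sin(πx)/(1 − λ(r)²·cos²(πx)) holds, where λ(r) = 2r/(1+r²), and the series on the left converges absolutely. -/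
open Real

theorem stmt_2 (r x : ℝ) (hr0 : 0 ≤ r) (hr1 : r < 1) (hx0 : 0 < x) (hx1 : x < 1) :
    Summable (fun k : ℕ => |r ^ (2 * k + 1) * Real.sin ((2 * k + 1) * π * x)|) ∧
    2 * ∑' k : ℕ, r ^ (2 * k + 1) * Real.sin ((2 * k + 1) * π * x) =
      (2 * r / (1 + r^2)) * Real.sin (π * x) /
        (1 - (2 * r / (1 + r^2))^2 * Real.cos (π * x)^2) := by
  set θ := π * x with hθ
  set s := Real.sin θ with hs
  set c := Real.cos θ with hc
  have hsc : s ^ 2 + c ^ 2 = 1 := Real.sin_sq_add_cos_sq θ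
  have hc2 : c ^ 2 ≤ 1 := Real.cos_sq_le_one θ
  -- summability
  have hsum : Summable (fun k : ℕ => |r ^ (2 * k + 1) * Real.sin ((2 * k + 1) * π * x)|) := by
    have hgeo : Summable (fun k : ℕ => r * (r ^ 2) ^ k) := by
      exact (summable_geometric_of_lt_one (by positivity) (by nlinarith)).mul_left r
    refine Summable.of_nonneg_of_le (fun k => abs_nonneg _) (fun k => ?_) hgeo
    have h1 : |r ^ (2 * k + 1) * Real.sin ((2 * k + 1) * π * x)| ≤ r ^ (2 * k + 1) := by
      rw [abs_mul]
      calc |r ^ (2 * k + 1)| * |Real.sin ((2 * k + 1) * π * x)| ≤ |r ^ (2 * k + 1)| * 1 :=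
            mul_le_mul_of_nonneg_left (abs_sin_le_one _) (abs_nonneg _)
        _ = r ^ (2 * k + 1) := by rw [mul_one, abs_of_nonneg (pow_nonneg hr0 _)]
    calc |r ^ (2 * k + 1) * Real.sin ((2 * k + 1) * π * x)| ≤ r ^ (2 * k + 1) := h1
      _ = r * (r ^ 2) ^ k := by ring
  refine ⟨hsum, ?_⟩
  -- complex geometric series
  set z : ℂ := (r : ℂ) * Complex.exp (θ * Complex.I) with hz
  have hzabs : ‖z‖ = r := by
    rw [hz, norm_mul, Complex.norm_real,
      Complex.norm_exp, Real.norm_of_nonneg hr0]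
    simp
  have hznorm : ‖z ^ 2‖ < 1 := by
    rw [norm_pow, hzabs]
    nlinarith
  have hgs : HasSum (fun k : ℕ => z * (z ^ 2) ^ k) (z * (1 - z ^ 2)⁻¹) :=
    (hasSum_geometric_of_norm_lt_one hznorm).mul_left z
  have him : HasSum (fun k : ℕ => (z * (z ^ 2) ^ k).im) ((z * (1 - z ^ 2)⁻¹).im) :=
    Complex.hasSum_im hgs
  have genim : ∀ (A B : ℝ), ((A:ℂ) * Complex.exp ((B:ℂ) * Complex.I)).im = A * Real.sin B := by
    intro A B
    rw [Complex.mul_im, Complex.exp_ofReal_mul_I_re, Complex.exp_ofReal_mul_I_im]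
    simp
  have genre : ∀ (A B : ℝ), ((A:ℂ) * Complex.exp ((B:ℂ) * Complex.I)).re = A * Real.cos B := by
    intro A B
    rw [Complex.mul_re, Complex.exp_ofReal_mul_I_re, Complex.exp_ofReal_mul_I_im]
    simp
  have hzn : ∀ n : ℕ, (z ^ n).im = r ^ n * Real.sin (n * θ) := by
    intro n
    rw [hz, mul_pow, ← Complex.ofReal_pow, ← Complex.exp_nat_mul]
    have h2 : (n : ℂ) * (θ * Complex.I) = ((n * θ : ℝ) : ℂ) * Complex.I := by push_cast; ring
    rw [h2, genim]
  have hterm : ∀ k : ℕ, (z * (z ^ 2) ^ k).im = r ^ (2 * k + 1) * Real.sin ((2 * k + 1) * π * x) := by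
    intro k
    have hpow : z * (z ^ 2) ^ k = z ^ (2 * k + 1) := by
      rw [← pow_mul, pow_succ, mul_comm]
    rw [hpow, hzn (2 * k + 1)]
    have h3 : ((2 * k + 1 : ℕ) : ℝ) * θ = (2 * (k:ℝ) + 1) * π * x := by rw [hθ]; push_cast; ring
    rw [h3]
  have htsum : ∑' k : ℕ, r ^ (2 * k + 1) * Real.sin ((2 * k + 1) * π * x)
      = (z * (1 - z ^ 2)⁻¹).im := by
    have h4 := him
    simp_rw [hterm] at h4
    exact h4.tsum_eq
  rw [htsum]
  -- compute re/im of z and 1 - z^2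
  have hzre : z.re = r * c := by rw [hz, genre]
  have hzim : z.im = r * s := by rw [hz, genim]
  have hre : (1 - z ^ 2).re = 1 - (r * c) ^ 2 + (r * s) ^ 2 := by
    simp [Complex.sub_re, pow_two, Complex.mul_re, hzre, hzim]; ring
  have him2 : (1 - z ^ 2).im = -(2 * (r * c) * (r * s)) := by
    simp [Complex.sub_im, pow_two, Complex.mul_im, hzre, hzim]; ring
  have hD : (0:ℝ) < (1 + r ^ 2) ^ 2 - 4 * r ^ 2 * c ^ 2 := by
    have h5 : 0 < 1 - r ^ 2 := by nlinarith
    nlinarith [sq_nonneg r, mul_pos h5 h5]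
  have key : (1 - (r * c) ^ 2 + (r * s) ^ 2) ^ 2 + (-(2 * (r * c) * (r * s))) ^ 2
      = (1 + r ^ 2) ^ 2 - 4 * r ^ 2 * c ^ 2 := by
    linear_combination (2 * r ^ 2 + 2 * r ^ 4 + r ^ 4 * (s ^ 2 + c ^ 2 - 1)) * hsc
  have hNsq : Complex.normSq (1 - z ^ 2) = (1 + r ^ 2) ^ 2 - 4 * r ^ 2 * c ^ 2 := by
    rw [Complex.normSq_apply, hre, him2, ← key]; ring
  have hw : (1 - z ^ 2) ≠ 0 := by
    intro h
    rw [h] at hNsq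
    simp at hNsq
    linarith
  have himval : (z * (1 - z ^ 2)⁻¹).im = r * s * (1 + r ^ 2) / ((1 + r ^ 2) ^ 2 - 4 * r ^ 2 * c ^ 2) := by
    have hnum : r * s * (1 - (r * c) ^ 2 + (r * s) ^ 2) - r * c * (-(2 * (r * c) * (r * s)))
        = r * s * (1 + r ^ 2) := by
      linear_combination (r ^ 3 * s) * hsc
    rw [← div_eq_mul_inv, Complex.div_im, hNsq, hre, him2, hzre, hzim, div_sub_div_same, hnum]
  rw [himval]
  have h1r : (1 + r ^ 2) ≠ 0 := by positivity
  have hden : 1 - (2 * r / (1 + r ^ 2)) ^ 2 * c ^ 2 ≠ 0 := by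
    have h7 : (2 * r / (1 + r ^ 2)) ^ 2 * c ^ 2 < 1 := by
      rw [div_pow, div_mul_eq_mul_div, div_lt_one (by positivity)]
      nlinarith [hD]
    linarith
  have hDne : ((1 + r ^ 2) ^ 2 - 4 * r ^ 2 * c ^ 2) ≠ 0 := ne_of_gt hD
  rw [← mul_div_assoc, div_eq_div_iff hDne hden]
  field_simp
  ring
end

section
/- If 0 < α < 1/2 satisfies sin(πα) > π²/8 − 1, then ∑_{j=3}^∞ |ĝ_α(j)| < ĝ_α(1), where ĝ_α(j) are the sine Fourier coefficients of g_α. -/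
open Real

lemma hasDerivAt_aux1 (c : ℝ) (hc : c ≠ 0) (x : ℝ) :
    HasDerivAt (fun y => (Real.sin (c*y) - c*y*Real.cos (c*y))/c^2) (x * Real.sin (c*x)) x := by
  have hcxy : HasDerivAt (fun y : ℝ => c*y) c x := by
    simpa using (hasDerivAt_id x).const_mul c
  have hs : HasDerivAt (fun y => Real.sin (c*y)) (Real.cos (c*x) * c) x :=
    (Real.hasDerivAt_sin (c*x)).comp x hcxy
  have hcos : HasDerivAt (fun y => Real.cos (c*y)) (-Real.sin (c*x) * c) x :=
    (Real.hasDerivAt_cos (c*x)).comp x hcxy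
  have hmul : HasDerivAt (fun y => c*y*Real.cos (c*y))
      (c * Real.cos (c*x) + c*x*(-Real.sin (c*x) * c)) x := hcxy.mul hcos
  have := (hs.sub hmul).div_const (c^2)
  convert this using 1
  rfl
  rfl
  rfl
  field_simp
  ring

lemma hasDerivAt_aux2 (c : ℝ) (hc : c ≠ 0) (x : ℝ) :
    HasDerivAt (fun y => -Real.cos (c*y)/c) (Real.sin (c*x)) x := by
  have hcxy : HasDerivAt (fun y : ℝ => c*y) c x := by
    simpa using (hasDerivAt_id x).const_mul c
  have hcos : HasDerivAt (fun y => Real.cos (c*y)) (-Real.sin (c*x) * c) x :=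
    (Real.hasDerivAt_cos (c*x)).comp x hcxy
  have := (hcos.neg).div_const c
  convert this using 1
  rfl
  rfl
  rfl
  field_simp

lemma integral_x_sin (c : ℝ) (hc : c ≠ 0) (a b : ℝ) :
    ∫ x in a..b, x * Real.sin (c*x)
      = (Real.sin (c*b) - c*b*Real.cos (c*b))/c^2 - (Real.sin (c*a) - c*a*Real.cos (c*a))/c^2 :=
  intervalIntegral.integral_eq_sub_of_hasDerivAt (fun x _ => hasDerivAt_aux1 c hc x)
    (Continuous.intervalIntegrable (by fun_prop) a b)

lemma integral_sin_c (c : ℝ) (hc : c ≠ 0) (a b : ℝ) :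
    ∫ x in a..b, Real.sin (c*x) = -Real.cos (c*b)/c - (-Real.cos (c*a)/c) :=
  intervalIntegral.integral_eq_sub_of_hasDerivAt (fun x _ => hasDerivAt_aux2 c hc x)
    (Continuous.intervalIntegrable (by fun_prop) a b)

lemma gcoeff_formula (α : ℝ) (hα0 : 0 < α) (hα : α < 1/2) (j : ℕ) (hj : 1 ≤ j) :
    gcoeff α j = 2 * (Real.sin ((j:ℝ)*π*α) + Real.sin ((j:ℝ)*π*(1-α))) / (α * ((j:ℝ)*π)^2) := by
  have hπ := Real.pi_pos
  have hjpos : (0:ℝ) < (j:ℝ) := by exact_mod_cast hj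
  set c : ℝ := (j:ℝ)*π with hcdef
  have hcpos : 0 < c := mul_pos hjpos hπ
  have hc : c ≠ 0 := ne_of_gt hcpos
  have hαne : α ≠ 0 := ne_of_gt hα0
  have hα1 : α < 1 - α := by linarith
  have hα2 : (1:ℝ) - α < 1 := by linarith
  -- EqOn lemmas
  have e1 : Set.EqOn (fun x => gprofile α x * Real.sin (c*x)) (fun x => x/α * Real.sin (c*x))
      (Set.uIcc 0 α) := by
    intro x hx
    rw [Set.uIcc_of_le (le_of_lt hα0)] at hx
    simp only [gprofile]
    split_ifs with h1 h2
    · rfl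
    · have hxα : x = α := le_antisymm hx.2 (not_lt.1 h1)
      rw [hxα]; field_simp
    · exfalso; exact h2 (lt_of_le_of_lt hx.2 hα1)
  have e2 : Set.EqOn (fun x => gprofile α x * Real.sin (c*x)) (fun x => Real.sin (c*x))
      (Set.uIcc α (1-α)) := by
    intro x hx
    rw [Set.uIcc_of_le (le_of_lt hα1)] at hx
    simp only [gprofile]
    split_ifs with h1 h2
    · exact absurd hx.1 (not_le.2 h1)
    · simp
    · have hx2 : x = 1 - α := le_antisymm hx.2 (not_lt.1 h2)
      rw [hx2]; field_simp
      ring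
  have e3 : Set.EqOn (fun x => gprofile α x * Real.sin (c*x)) (fun x => (1-x)/α * Real.sin (c*x))
      (Set.uIcc (1-α) 1) := by
    intro x hx
    rw [Set.uIcc_of_le (le_of_lt hα2)] at hx
    simp only [gprofile]
    split_ifs with h1 h2
    · exfalso; linarith [hx.1]
    · exfalso; linarith [hx.1]
    · rfl
  -- integrability
  have i1 : IntervalIntegrable (fun x => gprofile α x * Real.sin (c*x)) MeasureTheory.volume 0 α :=
    (ContinuousOn.congr (Continuous.continuousOn (by fun_prop)) e1).intervalIntegrable
  have i2 : IntervalIntegrable (fun x => gprofile α x * Real.sin (c*x)) MeasureTheory.volume α (1-α) :=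
    (ContinuousOn.congr (Continuous.continuousOn (by fun_prop)) e2).intervalIntegrable
  have i3 : IntervalIntegrable (fun x => gprofile α x * Real.sin (c*x)) MeasureTheory.volume (1-α) 1 :=
    (ContinuousOn.congr (Continuous.continuousOn (by fun_prop)) e3).intervalIntegrable
  have hsplit : (∫ x in (0:ℝ)..1, gprofile α x * Real.sin (c*x))
      = (∫ x in (0:ℝ)..α, gprofile α x * Real.sin (c*x))
        + (∫ x in α..(1-α), gprofile α x * Real.sin (c*x))
        + (∫ x in (1-α)..1, gprofile α x * Real.sin (c*x)) := by
    rw [intervalIntegral.integral_add_adjacent_intervals i1 i2,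
      intervalIntegral.integral_add_adjacent_intervals (i1.trans i2) i3]
  have h1 : (∫ x in (0:ℝ)..α, gprofile α x * Real.sin (c*x))
      = (1/α) * ∫ x in (0:ℝ)..α, x * Real.sin (c*x) := by
    rw [intervalIntegral.integral_congr e1, ← intervalIntegral.integral_const_mul]
    congr 1; funext x; ring
  have h2 : (∫ x in α..(1-α), gprofile α x * Real.sin (c*x))
      = ∫ x in α..(1-α), Real.sin (c*x) := intervalIntegral.integral_congr e2
  have h3 : (∫ x in (1-α)..1, gprofile α x * Real.sin (c*x))
      = (1/α) * ((∫ x in (1-α)..1, Real.sin (c*x)) - ∫ x in (1-α)..1, x * Real.sin (c*x)) := by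
    rw [intervalIntegral.integral_congr e3, ← intervalIntegral.integral_sub
      (Continuous.intervalIntegrable (by fun_prop) _ _)
      (Continuous.intervalIntegrable (by fun_prop) _ _),
      ← intervalIntegral.integral_const_mul]
    congr 1; funext x; ring
  have hsc : Real.sin (c*1) = 0 := by
    rw [mul_one, hcdef]; exact Real.sin_nat_mul_pi j
  rw [gcoeff]
  show 2 * (∫ x in (0:ℝ)..1, gprofile α x * Real.sin (c*x)) = _
  rw [hsplit, h1, h2, h3, integral_x_sin c hc, integral_x_sin c hc, integral_sin_c c hc,
    integral_sin_c c hc, hsc]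
  field_simp
  ring_nf
  rw [Real.sin_zero]; ring


lemma oddsum : HasSum (fun k : ℕ => (1:ℝ)/((2*k+1:ℕ):ℝ)^2) (π^2/8) := by
  set g : ℕ → ℝ := fun n => 1/(n:ℝ)^2 with hg
  have h : HasSum g (π^2/6) := hasSum_zeta_two
  have he : HasSum (fun k : ℕ => g (2*k)) (π^2/24) := by
    have h4 := h.mul_left (1/4)
    have : (fun k : ℕ => (1/4) * g k) = fun k : ℕ => g (2*k) := by
      funext k
      simp only [hg]
      push_cast
      rw [mul_pow, one_div_mul_one_div]
      norm_num
    rw [this] at h4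
    convert h4 using 1
    rfl
    ring
  have hoS : Summable (fun k : ℕ => g (2*k+1)) :=
    h.summable.comp_injective (fun a b hab => by omega)
  have htot : HasSum g (π^2/24 + ∑' k, g (2*k+1)) := he.even_add_odd hoS.hasSum
  have hval : ∑' k, g (2*k+1) = π^2/8 := by
    have := h.unique htot
    linarith
  have := hoS.hasSum
  rw [hval] at this
  exact this

lemma oddsum3 : HasSum (fun k : ℕ => (1:ℝ)/((2*(k+1)+1:ℕ):ℝ)^2) (π^2/8 - 1) := by
  have h := oddsum
  have h2 : HasSum (fun k : ℕ => (1:ℝ)/((2*k+1:ℕ):ℝ)^2)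
      ((π^2/8 - 1) + ∑ i ∈ Finset.range 1, (1:ℝ)/((2*i+1:ℕ):ℝ)^2) := by
    convert h using 1
    norm_num
  have := (hasSum_nat_add_iff (f := fun k : ℕ => (1:ℝ)/((2*k+1:ℕ):ℝ)^2) 1).2 h2
  exact this
lemma gcoeff_val (α : ℝ) (hα0 : 0 < α) (hα : α < 1/2) (j : ℕ) (hj : 1 ≤ j) :
    gcoeff α j = if Odd j then 4 * Real.sin ((j:ℝ)*π*α) / (α * ((j:ℝ)*π)^2) else 0 := by
  rw [gcoeff_formula α hα0 hα j hj]
  have harg : (j:ℝ)*π*(1-α) = (j:ℝ)*π - (j:ℝ)*π*α := by ring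
  rw [harg, Real.sin_nat_mul_pi_sub]
  by_cases hodd : Odd j
  · rw [if_pos hodd, Odd.neg_one_pow hodd]
    ring
  · rw [if_neg hodd, Even.neg_one_pow (Nat.not_odd_iff_even.1 hodd)]
    simp

theorem stmt_3 (α : ℝ) (hα0 : 0 < α) (hα : α < 1/2)
    (h : Real.sin (π * α) > π^2 / 8 - 1) :
    ∑' j : ℕ, |gcoeff α (j + 3)| < gcoeff α 1 := by
  have hπ := Real.pi_pos
  have hαne : α ≠ 0 := ne_of_gt hα0
  have hπne : π ≠ 0 := ne_of_gt hπ
  set T : ℝ := 4/(α*π^2) * (π^2/8 - 1) with hT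
  set f : ℕ → ℝ := fun k => if Even k then 4 / (α * (((k:ℝ)+3)*π)^2) else 0 with hf
  -- termwise bound
  have hFle : ∀ k : ℕ, |gcoeff α (k+3)| ≤ f k := by
    intro k
    have hj : 1 ≤ k + 3 := by omega
    rcases Nat.even_or_odd k with hk | hk
    · have hodd : Odd (k+3) := by
        rcases hk with ⟨m, rfl⟩; exact ⟨m+1, by ring⟩
      rw [gcoeff_val α hα0 hα (k+3) hj, if_pos hodd, hf]
      simp only [if_pos hk]
      push_cast
      have hden : 0 < α * (((k:ℝ)+3)*π)^2 := by positivity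
      rw [abs_div, abs_of_pos hden]
      gcongr
      rw [abs_mul, abs_of_nonneg (by norm_num : (0:ℝ) ≤ 4)]
      have := Real.abs_sin_le_one (((k:ℝ)+3) * π * α)
      linarith
    · have heven : ¬ Odd (k+3) := by
        rw [Nat.not_odd_iff_even]
        rcases hk with ⟨m, rfl⟩; exact ⟨m+2, by ring⟩
      rw [gcoeff_val α hα0 hα (k+3) hj, if_neg heven, hf]
      simp only [if_neg (by simpa [Nat.even_add_one, parity_simps] using hk : ¬ Even k)]
      simp
  have hfs : HasSum f T := by
    have base := oddsum3.mul_left (4/(α*π^2))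
    have he : HasSum (fun m : ℕ => f (2*m)) T := by
      have heq : (fun m : ℕ => f (2*m))
          = fun m : ℕ => (4/(α*π^2)) * ((1:ℝ)/((2*(m+1)+1:ℕ):ℝ)^2) := by
        funext m
        simp only [hf, if_pos (even_two_mul m)]
        push_cast
        have h1 : ((2:ℝ)*m+3) ≠ 0 := by positivity
        field_simp
        ring
      rw [heq, hT]
      exact base
    have ho : HasSum (fun m : ℕ => f (2*m+1)) 0 := by
      have heq : (fun m : ℕ => f (2*m+1)) = fun _ : ℕ => (0:ℝ) := by
        funext m
        simp only [hf]
        rw [if_neg (by simp [parity_simps])]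
      rw [heq]
      exact hasSum_zero
    have := he.even_add_odd ho
    simpa using this
  have hFs : Summable (fun k : ℕ => |gcoeff α (k+3)|) :=
    Summable.of_nonneg_of_le (fun k => abs_nonneg _) hFle hfs.summable
  have hc1 : gcoeff α 1 = (4/(α*π^2)) * Real.sin (π*α) := by
    rw [gcoeff_val α hα0 hα 1 le_rfl, if_pos odd_one]
    push_cast
    ring_nf
  calc ∑' k : ℕ, |gcoeff α (k+3)| ≤ ∑' k : ℕ, f k := Summable.tsum_le_tsum hFle hFs hfs.summable
    _ = T := hfs.tsum_eq
    _ < (4/(α*π^2)) * Real.sin (π*α) := by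
        have hpos : 0 < 4/(α*π^2) := by positivity
        rw [hT]
        exact (mul_lt_mul_iff_right₀ hpos).2 h
    _ = gcoeff α 1 := hc1.symm
end

section
/- For all 0 < α < 1/25, the inequality sin(3πα)/9 + sin(5πα)/25 + sin(9πα)/81 + sin(25πα)/625 < sin(πα) holds. -/
open Real

theorem stmt_5 (α : ℝ) (hα0 : 0 < α) (hα : α < 1/25) :
    Real.sin (3 * π * α) / 9 + Real.sin (5 * π * α) / 25 +
      Real.sin (9 * π * α) / 81 + Real.sin (25 * π * α) / 625 <
        Real.sin (π * α) := by
  have hπ := Real.pi_pos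
  have hπ4 := Real.pi_lt_d2
  set x := π * α with hx
  have hx0 : 0 < x := mul_pos hπ hα0
  have hx1 : x < 1/5 := by
    have : x < π * (1/25) := by
      apply mul_lt_mul_of_pos_left hα hπ
    nlinarith
  have h3 : Real.sin (3 * π * α) < 3 * x := by
    have := Real.sin_lt (show (0:ℝ) < 3 * x by linarith)
    calc Real.sin (3 * π * α) = Real.sin (3 * x) := by rw [hx]; ring_nf
      _ < 3 * x := this
  have h5 : Real.sin (5 * π * α) < 5 * x := by
    have := Real.sin_lt (show (0:ℝ) < 5 * x by linarith)
    calc Real.sin (5 * π * α) = Real.sin (5 * x) := by rw [hx]; ring_nf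
      _ < 5 * x := this
  have h9 : Real.sin (9 * π * α) < 9 * x := by
    have := Real.sin_lt (show (0:ℝ) < 9 * x by linarith)
    calc Real.sin (9 * π * α) = Real.sin (9 * x) := by rw [hx]; ring_nf
      _ < 9 * x := this
  have h25 : Real.sin (25 * π * α) < 25 * x := by
    have := Real.sin_lt (show (0:ℝ) < 25 * x by linarith)
    calc Real.sin (25 * π * α) = Real.sin (25 * x) := by rw [hx]; ring_nf
      _ < 25 * x := this
  have hlow : x - x^3/4 < Real.sin x := by
    have := Real.sin_gt_sub_cube hx0
    linarith [this, pow_pos hx0 3]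
  nlinarith [sq_nonneg x, hx0.le]
end

section
/- Let f be a 2-periodic function with sine Fourier coefficients f̂(j) satisfying |f̂(j)| ≤ φ_j for a summable sequence (φ_j) with total sum φ. Let F ⊆ ℕ be finite with 1 ∈ F, and let μ = min over the d-torus of |∑_{j∈F} f̂(j) w₁^{ν_{p₁}(j)}⋯w_d^{ν_{p_d}(j)}|, where p₁,…,p_d are the primes dividing elements of F and ν_p(j) is the p-adic valuation of j. If ∑_{j∈F,j≠1}|f̂(j)| < f̂(1) and μ − φ + ∑_{j∈F}|f̂(j)| + ∑_{j=1}^k (φ_j − |f̂(j)|) > 0 for some k, then the multiplier m_f(z) = ∑_{j≥1} f̂(j) j^{-z} satisfies inf_{Re z > 0} |m_f(z)| ≥ μ(1 − σ) > 0 for some σ < 1, and sup_{Re z > 0} |m_f(z)| < ∞. -/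
open Real

section StmtAux

open Complex Metric

private lemma stmt17_natCast_pow_cpow (q k : ℕ) (z : ℂ) :
    (((q ^ k : ℕ) : ℂ)) ^ z = ((q : ℂ) ^ z) ^ k := by
  push_cast
  rw [← Complex.natCast_cpow_natCast_mul, Complex.cpow_nat_mul]

private lemma stmt17_natCast_prod_cpow (s : Finset ℕ) (f : ℕ → ℕ) (z : ℂ) :
    ((∏ i ∈ s, f i : ℕ) : ℂ) ^ z = ∏ i ∈ s, ((f i : ℕ) : ℂ) ^ z := by
  classical
  induction s using Finset.induction with
  | empty => simp
  | @insert _ _ h ih =>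
    rw [Finset.prod_insert h, Finset.prod_insert h, ← ih, Nat.cast_mul,
      Complex.natCast_mul_natCast_cpow]

private lemma stmt17_natCast_cpow_factorization (n : ℕ) (hn : n ≠ 0) (z : ℂ) :
    ((n : ℕ) : ℂ) ^ z = ∏ q ∈ n.primeFactors, ((q : ℂ) ^ z) ^ (n.factorization q) := by
  have hself : ∏ q ∈ n.primeFactors, q ^ n.factorization q = n := by
    rw [← Nat.support_factorization]
    exact Nat.factorization_prod_pow_eq_self hn
  conv_lhs => rw [← hself]
  rw [stmt17_natCast_prod_cpow]
  exact Finset.prod_congr rfl fun q _ => stmt17_natCast_pow_cpow _ _ _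

private noncomputable def stmt17_S (c : ℕ → ℂ) (F : Finset ℕ) (w : ℕ → ℂ) : ℂ :=
  ∑ n ∈ F, c n * ∏ q ∈ n.primeFactors, (w q) ^ (n.factorization q)

private lemma stmt17_lemA (c : ℕ → ℂ) (F : Finset ℕ) (h1F : 1 ∈ F)
    (w : ℕ → ℂ) (hw : ∀ q, ‖w q‖ ≤ 1) :
    (c 1).re - ∑ j ∈ F.erase 1, ‖c j‖ ≤ ‖stmt17_S c F w‖ := by
  classical
  set T : ℂ := ∑ n ∈ F.erase 1, c n * ∏ q ∈ n.primeFactors, (w q) ^ (n.factorization q) with hT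
  have hsplit : stmt17_S c F w = c 1 + T := by
    rw [stmt17_S, ← Finset.add_sum_erase F _ h1F]
    simp [hT]
  have hbound : ‖T‖ ≤ ∑ n ∈ F.erase 1, ‖c n‖ := by
    refine (norm_sum_le _ _).trans (Finset.sum_le_sum fun n _ => ?_)
    rw [norm_mul]
    have hple : ‖∏ q ∈ n.primeFactors, (w q) ^ (n.factorization q)‖ ≤ 1 := by
      rw [norm_prod]
      refine Finset.prod_le_one (fun q _ => norm_nonneg _) (fun q _ => ?_)
      rw [norm_pow]
      exact pow_le_one₀ (norm_nonneg _) (hw q)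
    calc ‖c n‖ * ‖∏ q ∈ n.primeFactors, (w q) ^ (n.factorization q)‖
        ≤ ‖c n‖ * 1 := mul_le_mul_of_nonneg_left hple (norm_nonneg _)
      _ = ‖c n‖ := mul_one _
  have h1le : ‖c 1‖ ≤ ‖stmt17_S c F w‖ + ‖T‖ := by
    calc ‖c 1‖ = ‖(c 1 + T) + (-T)‖ := by ring_nf
      _ ≤ ‖c 1 + T‖ + ‖-T‖ := norm_add_le _ _
      _ = ‖stmt17_S c F w‖ + ‖T‖ := by rw [hsplit, norm_neg]
  have hre : (c 1).re ≤ ‖c 1‖ := Complex.re_le_norm _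
  linarith

private lemma stmt17_lemB (c : ℕ → ℂ) (F : Finset ℕ)
    (μ δ : ℝ) (hδpos : 0 < δ)
    (hδle : ∀ w : ℕ → ℂ, (∀ q, ‖w q‖ ≤ 1) → δ ≤ ‖stmt17_S c F w‖)
    (hμlb : ∀ w : ℕ → ℂ, (∀ q, ‖w q‖ = 1) → μ ≤ ‖stmt17_S c F w‖)
    (hμpos : 0 < μ) :
    ∀ (P : Finset ℕ) (w : ℕ → ℂ), (∀ q, ‖w q‖ ≤ 1) → (∀ q, q ∉ P → ‖w q‖ = 1) →
      μ ≤ ‖stmt17_S c F w‖ := by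
  classical
  intro P
  induction P using Finset.induction with
  | empty =>
    intro w hw hw1
    exact hμlb w (fun q => hw1 q (by simp))
  | @insert a P ha ih =>
    intro w hw hw1
    set g : ℂ → ℂ := fun u => stmt17_S c F (Function.update w a u) with hg
    have hupdle : ∀ u : ℂ, ‖u‖ ≤ 1 → ∀ q, ‖Function.update w a u q‖ ≤ 1 := by
      intro u hu q
      by_cases hq : q = a
      · subst hq; rw [Function.update_self]; exact hu
      · rw [Function.update_of_ne hq]; exact hw q
    have hgdiff : Differentiable ℂ g := by
      rw [hg]
      unfold stmt17_S
      refine Differentiable.fun_sum fun n _ => Differentiable.const_mul ?_ _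
      refine Differentiable.fun_finsetProd fun q _ => ?_
      by_cases hq : q = a
      · subst hq
        simp only [Function.update_self]
        exact differentiable_id.pow _
      · simp only [Function.update_of_ne hq]
        exact (differentiable_const _).pow _
    have hne : ∀ u ∈ closedBall (0:ℂ) 1, g u ≠ 0 := by
      intro u hu h0
      rw [mem_closedBall_zero_iff] at hu
      have hδg : δ ≤ ‖g u‖ := hδle _ (hupdle u hu)
      rw [h0, norm_zero] at hδg
      linarith
    have hfr : ∀ u ∈ frontier (ball (0:ℂ) 1), ‖(g u)⁻¹‖ ≤ μ⁻¹ := by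
      intro u hu
      rw [frontier_ball 0 one_ne_zero, mem_sphere_zero_iff_norm] at hu
      have hμg : μ ≤ ‖g u‖ := by
        refine ih (Function.update w a u) (hupdle u hu.le) (fun q hq => ?_)
        by_cases hqa : q = a
        · subst hqa; rw [Function.update_self]; exact hu
        · rw [Function.update_of_ne hqa]
          exact hw1 q (by simp [hqa, hq])
      rw [norm_inv]
      exact (inv_le_inv₀ (lt_of_lt_of_le hμpos hμg) hμpos).mpr hμg
    have hdc : DiffContOnCl ℂ (fun u => (g u)⁻¹) (ball (0:ℂ) 1) := by
      constructor
      · exact (hgdiff.differentiableOn).inv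
          (fun u hu => hne u (ball_subset_closedBall hu))
      · rw [closure_ball (0:ℂ) one_ne_zero]
        exact (hgdiff.continuous.continuousOn).inv₀
          (fun u hu => hne u (by simpa using hu))
    have hmem : w a ∈ closure (ball (0:ℂ) 1) := by
      rw [closure_ball (0:ℂ) one_ne_zero, mem_closedBall_zero_iff]
      exact hw a
    have hkey := Complex.norm_le_of_forall_mem_frontier_norm_le isBounded_ball hdc hfr hmem
    have hgne : g (w a) ≠ 0 := hne _ (by rw [mem_closedBall_zero_iff]; exact hw a)
    rw [norm_inv] at hkey
    have h0 : 0 < ‖g (w a)‖ := norm_pos_iff.mpr hgne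
    have hfin : μ ≤ ‖g (w a)‖ := by
      rwa [inv_le_inv₀ h0 hμpos] at hkey
    simpa only [hg, Function.update_eq_self] using hfin

end StmtAux

theorem stmt_17
    (f : ℝ → ℂ) (hper : ∀ x, f (x + 2) = f x)
    (c : ℕ → ℂ)
    (hc : ∀ j : ℕ, c j = 2 * ∫ x in (0:ℝ)..1, f x * (Real.sin (j * π * x) : ℂ))
    (φ : ℕ → ℝ) (hφ : Summable (fun j : ℕ => φ (j + 1)))
    (hbd : ∀ j : ℕ, 1 ≤ j → ‖c j‖ ≤ φ j)
    (F : Finset ℕ) (h1F : 1 ∈ F) (hFpos : ∀ n ∈ F, 1 ≤ n)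
    (μ : ℝ)
    (hμ : IsLeast {v : ℝ | ∃ w : ℕ → ℂ, (∀ q, ‖w q‖ = 1) ∧
        v = ‖∑ n ∈ F, c n * ∏ q ∈ n.primeFactors, (w q) ^ (n.factorization q)‖} μ)
    (k : ℕ)
    (hre : (c 1).im = 0)
    (h1 : ∑ j ∈ F.erase 1, ‖c j‖ < (c 1).re)
    (h2 : 0 < μ - (∑' j : ℕ, φ (j + 1)) + (∑ j ∈ F, ‖c j‖) +
        ∑ j ∈ Finset.range k, (φ (j + 1) - ‖c (j + 1)‖)) :
    (∃ σ : ℝ, σ < 1 ∧ 0 < μ * (1 - σ) ∧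
      ∀ z : ℂ, 0 < z.re →
        μ * (1 - σ) ≤ ‖∑' j : ℕ, c (j + 1) * ((j + 1 : ℕ) : ℂ) ^ (-z)‖) ∧
    ∃ M : ℝ, ∀ z : ℂ, 0 < z.re →
      ‖∑' j : ℕ, c (j + 1) * ((j + 1 : ℕ) : ℂ) ^ (-z)‖ ≤ M := by
  classical
  set Φ : ℝ := ∑' j : ℕ, φ (j + 1) with hΦ
  set δ : ℝ := (c 1).re - ∑ j ∈ F.erase 1, ‖c j‖ with hδ
  have hδpos : 0 < δ := sub_pos.mpr h1
  have hδle : ∀ w : ℕ → ℂ, (∀ q, ‖w q‖ ≤ 1) → δ ≤ ‖stmt17_S c F w‖ :=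
    fun w hw => stmt17_lemA c F h1F w hw
  have hμlb : ∀ w : ℕ → ℂ, (∀ q, ‖w q‖ = 1) → μ ≤ ‖stmt17_S c F w‖ := by
    intro w hw
    exact hμ.2 ⟨w, hw, rfl⟩
  have hμpos : 0 < μ := by
    obtain ⟨w₀, hw₀, hμeq⟩ := hμ.1
    have h := hδle w₀ (fun q => (hw₀ q).le)
    have : μ = ‖stmt17_S c F w₀‖ := hμeq
    linarith
  -- summability facts
  have hsumc : Summable (fun j : ℕ => ‖c (j + 1)‖) :=
    hφ.of_nonneg_of_le (fun j => norm_nonneg _) (fun j => hbd (j + 1) (by omega))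
  set C : ℝ := ∑' j : ℕ, ‖c (j + 1)‖ with hC
  have hsumdiff : Summable (fun j : ℕ => φ (j + 1) - ‖c (j + 1)‖) := hφ.sub hsumc
  have hCle : C ≤ Φ - ∑ j ∈ Finset.range k, (φ (j + 1) - ‖c (j + 1)‖) := by
    have h := Summable.sum_le_tsum (Finset.range k)
      (fun j _ => sub_nonneg.mpr (hbd (j + 1) (by omega))) hsumdiff
    have heq : ∑' j : ℕ, (φ (j + 1) - ‖c (j + 1)‖) = Φ - C := Summable.tsum_sub hφ hsumc
    linarith
  set ψ : ℕ → ℝ := fun n => if n = 0 then 0 else ‖c n‖ with hψ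
  have hψ0 : ∀ n, 0 ≤ ψ n := by
    intro n; by_cases h : n = 0 <;> simp [hψ, h]
  have hsumψ : Summable ψ := by
    rw [← summable_nat_add_iff 1]
    simpa [hψ] using hsumc
  have htsumψ : ∑' n, ψ n = C := by
    rw [Summable.tsum_eq_zero_add hsumψ]
    simp [hψ, hC]
  have hψF : ∑ n ∈ F, ψ n = ∑ n ∈ F, ‖c n‖ := by
    refine Finset.sum_congr rfl fun n hn => ?_
    have : n ≠ 0 := by have := hFpos n hn; omega
    simp [hψ, this]
  set L : ℝ := μ - Φ + (∑ j ∈ F, ‖c j‖) +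
      ∑ j ∈ Finset.range k, (φ (j + 1) - ‖c (j + 1)‖) with hLdef
  have hLpos : 0 < L := h2
  have key : ∀ z : ℂ, 0 < z.re →
      L ≤ ‖∑' j : ℕ, c (j + 1) * ((j + 1 : ℕ) : ℂ) ^ (-z)‖ ∧
      ‖∑' j : ℕ, c (j + 1) * ((j + 1 : ℕ) : ℂ) ^ (-z)‖ ≤ C := by
    intro z hz
    have hcpow : ∀ n : ℕ, n ≠ 0 → ‖((n : ℕ) : ℂ) ^ (-z)‖ ≤ 1 := by
      intro n hn
      rw [Complex.norm_natCast_cpow_of_pos (Nat.pos_of_ne_zero hn)]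
      apply Real.rpow_le_one_of_one_le_of_nonpos
      · exact_mod_cast Nat.one_le_iff_ne_zero.mpr hn
      · simpa using hz.le
    set b : ℕ → ℂ := fun n => if n = 0 then 0 else c n * ((n : ℕ) : ℂ) ^ (-z) with hb
    have hbnorm : ∀ n, ‖b n‖ ≤ ψ n := by
      intro n
      by_cases h : n = 0
      · simp [hb, hψ, h]
      · simp only [hb, hψ, if_neg h]
        calc ‖c n * ((n : ℕ) : ℂ) ^ (-z)‖ = ‖c n‖ * ‖((n : ℕ) : ℂ) ^ (-z)‖ := norm_mul _ _
          _ ≤ ‖c n‖ * 1 := mul_le_mul_of_nonneg_left (hcpow n h) (norm_nonneg _)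
          _ = ‖c n‖ := mul_one _
    have hsumb : Summable b := Summable.of_norm_bounded hsumψ hbnorm
    have htsum_ab : ∑' j : ℕ, c (j + 1) * ((j + 1 : ℕ) : ℂ) ^ (-z) = ∑' n, b n := by
      rw [Summable.tsum_eq_zero_add hsumb]
      simp [hb]
    have hsplit : ∑ n ∈ F, b n + ∑' (n : ↑((↑F : Set ℕ)ᶜ)), b ↑n = ∑' n, b n :=
      Summable.sum_add_tsum_compl hsumb
    -- main term
    set P : Finset ℕ := F.biUnion Nat.primeFactors with hP
    set wz : ℕ → ℂ := fun q => if q ∈ P then ((q : ℕ) : ℂ) ^ (-z) else 1 with hwz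
    have hwzle : ∀ q, ‖wz q‖ ≤ 1 := by
      intro q
      by_cases h : q ∈ P
      · have hq : q ≠ 0 := by
          rw [hP] at h
          obtain ⟨n, _, hqn⟩ := Finset.mem_biUnion.mp h
          exact (Nat.prime_of_mem_primeFactors hqn).ne_zero
        simp only [hwz, if_pos h]
        exact hcpow q hq
      · simp [hwz, h]
    have hwz1 : ∀ q, q ∉ P → ‖wz q‖ = 1 := by
      intro q h; simp [hwz, h]
    have hmain : ∑ n ∈ F, b n = stmt17_S c F wz := by
      rw [stmt17_S]
      refine Finset.sum_congr rfl fun n hn => ?_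
      have hn0 : n ≠ 0 := by have := hFpos n hn; omega
      simp only [hb, if_neg hn0]
      congr 1
      rw [stmt17_natCast_cpow_factorization n hn0 (-z)]
      refine Finset.prod_congr rfl fun q hq => ?_
      have hqP : q ∈ P := Finset.mem_biUnion.mpr ⟨n, hn, hq⟩
      simp only [hwz, if_pos hqP]
    have hμmain : μ ≤ ‖∑ n ∈ F, b n‖ := by
      rw [hmain]
      exact stmt17_lemB c F μ δ hδpos hδle hμlb hμpos P wz hwzle hwz1
    -- tail
    have hsumbsub : Summable (fun n : ↑((↑F : Set ℕ)ᶜ) => ‖b ↑n‖) :=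
      (hsumb.norm.subtype _)
    have hsumψsub : Summable (fun n : ↑((↑F : Set ℕ)ᶜ) => ψ ↑n) :=
      (hsumψ.subtype _)
    have htail : ‖∑' (n : ↑((↑F : Set ℕ)ᶜ)), b ↑n‖ ≤ C - ∑ n ∈ F, ‖c n‖ := by
      have h1' : ‖∑' (n : ↑((↑F : Set ℕ)ᶜ)), b ↑n‖ ≤ ∑' (n : ↑((↑F : Set ℕ)ᶜ)), ψ ↑n := by
        refine (norm_tsum_le_tsum_norm hsumbsub).trans ?_
        exact Summable.tsum_le_tsum (fun n => hbnorm ↑n) hsumbsub hsumψsub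
      have h2' : ∑ n ∈ F, ψ n + ∑' (n : ↑((↑F : Set ℕ)ᶜ)), ψ ↑n = ∑' n, ψ n :=
        Summable.sum_add_tsum_compl hsumψ
      rw [htsumψ] at h2'
      rw [hψF] at h2'
      linarith
    constructor
    · rw [htsum_ab, ← hsplit]
      have hnorm : μ - (C - ∑ n ∈ F, ‖c n‖) ≤
          ‖∑ n ∈ F, b n + ∑' (n : ↑((↑F : Set ℕ)ᶜ)), b ↑n‖ := by
        have := norm_add_le (∑ n ∈ F, b n + ∑' (n : ↑((↑F : Set ℕ)ᶜ)), b ↑n)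
          (-(∑' (n : ↑((↑F : Set ℕ)ᶜ)), b ↑n))
        simp only [add_neg_cancel_right, norm_neg] at this
        linarith
      have : L ≤ μ - (C - ∑ n ∈ F, ‖c n‖) := by
        rw [hLdef]; linarith
      linarith
    · rw [htsum_ab]
      have h1' : ‖∑' n, b n‖ ≤ ∑' n, ψ n := by
        refine (norm_tsum_le_tsum_norm hsumb.norm).trans ?_
        exact Summable.tsum_le_tsum hbnorm hsumb.norm hsumψ
      rw [htsumψ] at h1'
      exact h1'
  refine ⟨⟨1 - L / μ, ?_, ?_, ?_⟩, ⟨C, fun z hz => (key z hz).2⟩⟩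
  · have : 0 < L / μ := div_pos hLpos hμpos
    linarith
  · have hμL : μ * (1 - (1 - L / μ)) = L := by
      field_simp
      ring
    rw [hμL]; exact hLpos
  · intro z hz
    have hμL : μ * (1 - (1 - L / μ)) = L := by
      field_simp
      ring
    rw [hμL]
    exact (key z hz).1
end
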